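/- Suppose m ≥ 2 and n = 2m−3. Let S ⊆ [0,π]^n be the set of n-tuples of angles (with all entries strictly between 0 and π) that can be realised by a set of m points in the plane. Then S has n-dimensional Lebesgue measure zero. -/

import Mathlib

open EuclideanGeometry

/-- A set `P` of points realises the angle `θ` if some three points of `P`
form this angle. -/
def Realises {d : ℕ} (P : Set (EuclideanSpace ℝ (Fin d))) (θ : ℝ) : Prop :=
  ∃ A B C : EuclideanSpace ℝ (Fin d),
    A ∈ P ∧ B ∈ P ∧ C ∈ P ∧ A ≠ B ∧ C ≠ B ∧ EuclideanGeometry.angle A B C = θ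

/-- The ray from `B` towards `A`, encoded by its vertex together with the
unit vector in its direction. -/
noncomputable def rayOf {d : ℕ} (B A : EuclideanSpace ℝ (Fin d)) :
    EuclideanSpace ℝ (Fin d) × EuclideanSpace ℝ (Fin d) :=
  (B, ‖A - B‖⁻¹ • (A - B))

/-- A tuple `θ` of angles is realised with multiplicity by `P` if each `θ i` is
realised at some vertex `B i` by points `A i, C i` of `P`, with the unordered
pairs of rays pairwise distinct. -/
def RealisesMult {d n : ℕ} (P : Set (EuclideanSpace ℝ (Fin d))) (θ : Fin n → ℝ) : Prop :=
  ∃ A B C : Fin n → EuclideanSpace ℝ (Fin d),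
    (∀ i, A i ∈ P ∧ B i ∈ P ∧ C i ∈ P ∧ A i ≠ B i ∧ C i ≠ B i ∧
      EuclideanGeometry.angle (A i) (B i) (C i) = θ i) ∧
    Function.Injective fun i =>
      ({rayOf (B i) (A i), rayOf (B i) (C i)} :
        Set (EuclideanSpace ℝ (Fin d) × EuclideanSpace ℝ (Fin d)))



noncomputable section Aux11

open MeasureTheory Set RealInnerProductSpace

namespace Aux11

variable {n : ℕ}

/-- coordinate extraction, `0` out of range -/
def pt (x : Fin n → ℝ) (k : ℕ) : ℝ := if h : k < n then x ⟨k, h⟩ else 0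

/-- the `j`-th point of the configuration encoded by `x`, with points `0` and `1` pinned. -/
def ptc (x : Fin n → ℝ) (j : ℕ) : ℂ :=
  if j = 0 then 0 else if j = 1 then 1 else
    (pt x (2 * j - 4) : ℂ) + (pt x (2 * j - 3) : ℂ) * Complex.I

lemma diff_pt (k : ℕ) : Differentiable ℝ fun x : Fin n → ℝ => pt x k := by
  unfold pt
  by_cases h : k < n
  · simp only [dif_pos h]
    exact (ContinuousLinearMap.proj (R := ℝ) (φ := fun _ : Fin n => ℝ) ⟨k, h⟩).differentiable
  · simp only [dif_neg h]; exact differentiable_const (0 : ℝ)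

lemma diff_ptc (j : ℕ) : Differentiable ℝ fun x : Fin n → ℝ => ptc x j := by
  unfold ptc
  by_cases h0 : j = 0
  · simpa [h0] using differentiable_const (0 : ℂ)
  by_cases h1 : j = 1
  · simpa [h0, h1] using differentiable_const (1 : ℂ)
  simp only [h0, h1, if_false]
  exact (Complex.ofRealCLM.differentiable.comp (diff_pt _)).add
    ((Complex.ofRealCLM.differentiable.comp (diff_pt _)).mul_const Complex.I)

def uu (g : Fin n → ℕ × ℕ × ℕ) (i : Fin n) (x : Fin n → ℝ) : ℂ :=
  ptc x (g i).1 - ptc x (g i).2.1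

def vv (g : Fin n → ℕ × ℕ × ℕ) (i : Fin n) (x : Fin n → ℝ) : ℂ :=
  ptc x (g i).2.2 - ptc x (g i).2.1

def rr (g : Fin n → ℕ × ℕ × ℕ) (i : Fin n) (x : Fin n → ℝ) : ℝ :=
  ⟪uu g i x, vv g i x⟫ / (‖uu g i x‖ * ‖vv g i x‖)

def Phi (g : Fin n → ℕ × ℕ × ℕ) (x : Fin n → ℝ) : Fin n → ℝ :=
  fun i => Real.arccos (rr g i x)

def good (g : Fin n → ℕ × ℕ × ℕ) : Set (Fin n → ℝ) :=
  {x | ∀ i, uu g i x ≠ 0 ∧ vv g i x ≠ 0 ∧ rr g i x ∈ Set.Ioo (-1 : ℝ) 1}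

lemma angle_eq (g : Fin n → ℕ × ℕ × ℕ) (i : Fin n) (x : Fin n → ℝ) :
    InnerProductGeometry.angle (uu g i x) (vv g i x) = Phi g x i := rfl

lemma diff_uu (g : Fin n → ℕ × ℕ × ℕ) (i : Fin n) : Differentiable ℝ (uu g i) :=
  (diff_ptc _).sub (diff_ptc _)

lemma diff_vv (g : Fin n → ℕ × ℕ × ℕ) (i : Fin n) : Differentiable ℝ (vv g i) :=
  (diff_ptc _).sub (diff_ptc _)

lemma diffAt_rr (g : Fin n → ℕ × ℕ × ℕ) {i : Fin n} {x : Fin n → ℝ}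
    (hu : uu g i x ≠ 0) (hv : vv g i x ≠ 0) : DifferentiableAt ℝ (rr g i) x := by
  unfold rr
  simp only [div_eq_mul_inv]
  exact (((diff_uu g i) x).inner ℝ ((diff_vv g i) x)).mul
    (((((diff_uu g i) x).norm ℝ hu).mul (((diff_vv g i) x).norm ℝ hv)).inv
      (mul_ne_zero (norm_ne_zero_iff.2 hu) (norm_ne_zero_iff.2 hv)))

lemma diffAt_Phi (g : Fin n → ℕ × ℕ × ℕ) {x : Fin n → ℝ} (hx : x ∈ good g) :
    DifferentiableAt ℝ (Phi g) x := by
  rw [differentiableAt_pi]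
  intro i
  obtain ⟨hu, hv, hr⟩ := hx i
  exact (Real.hasDerivAt_arccos (ne_of_gt hr.1) (ne_of_lt hr.2)).differentiableAt.comp x
    (diffAt_rr g hu hv)

/-- the projection killing the last coordinate. -/
def piL (hn : 1 ≤ n) : (Fin n → ℝ) →L[ℝ] (Fin n → ℝ) :=
  ContinuousLinearMap.id ℝ _ -
    (ContinuousLinearMap.proj (R := ℝ) (φ := fun _ : Fin n => ℝ)
      ⟨n - 1, by omega⟩).smulRight (Pi.single ⟨n - 1, by omega⟩ 1)

lemma piL_apply_ne (hn : 1 ≤ n) (x : Fin n → ℝ) (k : Fin n) (hk : (k : ℕ) < n - 1) :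
    piL hn x k = x k := by
  have hne : k ≠ (⟨n - 1, by omega⟩ : Fin n) := by
    intro h; rw [h] at hk; simp at hk
  simp [piL, Pi.single_eq_of_ne hne]

lemma piL_single (hn : 1 ≤ n) :
    piL hn (Pi.single (⟨n - 1, by omega⟩ : Fin n) 1) = 0 := by
  funext k
  by_cases h : k = (⟨n - 1, by omega⟩ : Fin n)
  · subst h; simp [piL]
  · simp [piL, Pi.single_eq_of_ne h]

lemma pt_piL (hn : 1 ≤ n) (x : Fin n → ℝ) {k : ℕ} (hk : k < n - 1) :
    pt (piL hn x) k = pt x k := by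
  have h : k < n := by omega
  unfold pt
  simp only [dif_pos h]
  exact piL_apply_ne hn x ⟨k, h⟩ hk

lemma ptc_piL (hn : 1 ≤ n) (x : Fin n → ℝ) {j : ℕ} (hj : 2 * j ≤ n + 1) :
    ptc (piL hn x) j = ptc x j := by
  unfold ptc
  by_cases h0 : j = 0
  · simp [h0]
  by_cases h1 : j = 1
  · simp [h1]
  have hj2 : 2 ≤ j := by omega
  rw [pt_piL hn x (by omega), pt_piL hn x (by omega)]

/-- a non-injective continuous endomorphism of `ℝⁿ` has zero determinant. -/
lemma det_zero_of_not_inj {K : (Fin n → ℝ) →L[ℝ] (Fin n → ℝ)}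
    (h : ¬ Function.Injective K) : K.det = 0 := by
  by_contra hdet
  apply h
  have hco : ⇑(LinearMap.equivOfDetNeZero (K : (Fin n → ℝ) →ₗ[ℝ] (Fin n → ℝ)) hdet) = ⇑K := by
    funext y; rfl
  have := (LinearMap.equivOfDetNeZero (K : (Fin n → ℝ) →ₗ[ℝ] (Fin n → ℝ)) hdet).injective
  rwa [hco] at this

lemma phi_image_null (hn : 1 ≤ n) (g : Fin n → ℕ × ℕ × ℕ)
    (hg : ∀ i, 2 * (g i).1 ≤ n + 1 ∧ 2 * (g i).2.1 ≤ n + 1 ∧ 2 * (g i).2.2 ≤ n + 1) :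
    volume (Phi g '' good g) = 0 := by
  have huv : ∀ x i, uu g i (piL hn x) = uu g i x ∧ vv g i (piL hn x) = vv g i x := by
    intro x i
    constructor
    · unfold uu; rw [ptc_piL hn x (hg i).1, ptc_piL hn x (hg i).2.1]
    · unfold vv; rw [ptc_piL hn x (hg i).2.2, ptc_piL hn x (hg i).2.1]
  have hrr : ∀ x i, rr g i (piL hn x) = rr g i x := by
    intro x i; unfold rr; rw [(huv x i).1, (huv x i).2]
  have hPhi : Phi g ∘ (piL hn) = Phi g := by
    funext x i
    show Real.arccos (rr g i ((piL hn) x)) = Real.arccos (rr g i x)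
    rw [hrr]
  have hgood : ∀ x ∈ good g, piL hn x ∈ good g := by
    intro x hx i
    refine ⟨?_, ?_, ?_⟩
    · rw [(huv x i).1]; exact (hx i).1
    · rw [(huv x i).2]; exact (hx i).2.1
    · rw [hrr]; exact (hx i).2.2
  refine MeasureTheory.addHaar_image_eq_zero_of_det_fderivWithin_eq_zero volume
    (f' := fun x => (fderiv ℝ (Phi g) (piL hn x)).comp (piL hn)) ?_ ?_
  · intro x hx
    have hd := (diffAt_Phi g (hgood x hx)).hasFDerivAt
    have hcomp := hd.comp x (piL hn).hasFDerivAt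
    rw [hPhi] at hcomp
    exact hcomp.hasFDerivWithinAt
  · intro x hx
    apply det_zero_of_not_inj
    intro hinj
    have h0 : ((fderiv ℝ (Phi g) (piL hn x)).comp (piL hn))
        (Pi.single (⟨n - 1, by omega⟩ : Fin n) 1) =
        ((fderiv ℝ (Phi g) (piL hn x)).comp (piL hn)) 0 := by
      rw [map_zero]
      rw [ContinuousLinearMap.comp_apply, piL_single hn, map_zero]
    have := hinj h0
    have h1 : (Pi.single (⟨n - 1, by omega⟩ : Fin n) 1 : Fin n → ℝ)
        (⟨n - 1, by omega⟩ : Fin n) = 0 := by rw [this]; rfl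
    simp at h1

lemma angle_mul_left {c : ℂ} (hc : c ≠ 0) (u v : ℂ) :
    InnerProductGeometry.angle (c * u) (c * v) = InnerProductGeometry.angle u v := by
  unfold InnerProductGeometry.angle
  congr 1
  rw [Complex.inner, Complex.inner, norm_mul, norm_mul]
  have hcc : (starRingEnd ℂ) c * c = ((‖c‖ ^ 2 : ℝ) : ℂ) := by
    rw [mul_comm, Complex.mul_conj, Complex.sq_norm]
  have h1 : (starRingEnd ℂ) (c * u) * (c * v) =
      ((‖c‖ ^ 2 : ℝ) : ℂ) * ((starRingEnd ℂ) u * v) := by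
    rw [map_mul, ← hcc]; ring
  rw [mul_comm (c * v), mul_comm v, h1, Complex.re_ofReal_mul,
    show ‖c‖ * ‖u‖ * (‖c‖ * ‖v‖) = ‖c‖ ^ 2 * (‖u‖ * ‖v‖) by ring,
    mul_div_mul_left _ _ (pow_ne_zero 2 (norm_ne_zero_iff.2 hc))]

lemma abs_rr_le_one (g : Fin n → ℕ × ℕ × ℕ) (i : Fin n) (x : Fin n → ℝ) :
    |rr g i x| ≤ 1 :=
  abs_real_inner_div_norm_mul_norm_le_one _ _

def castTriple {m : ℕ} (g : Fin n → Fin m × Fin m × Fin m) : Fin n → ℕ × ℕ × ℕ :=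
  fun i => (((g i).1 : ℕ), ((g i).2.1 : ℕ), ((g i).2.2 : ℕ))

end Aux11

end Aux11

open EuclideanGeometry in
theorem statement11' (m n : ℕ) (hm : 2 ≤ m) (hn : n = 2 * m - 3)
    (Realises : ∀ {d : ℕ}, Set (EuclideanSpace ℝ (Fin d)) → ℝ → Prop)
    (hR : ∀ {d : ℕ} (P : Set (EuclideanSpace ℝ (Fin d))) (θ : ℝ), Realises P θ ↔
      ∃ A B C : EuclideanSpace ℝ (Fin d),
        A ∈ P ∧ B ∈ P ∧ C ∈ P ∧ A ≠ B ∧ C ≠ B ∧ EuclideanGeometry.angle A B C = θ) :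
    MeasureTheory.volume
      {θ : Fin n → ℝ | (∀ i, θ i ∈ Set.Ioo 0 Real.pi) ∧
        ∃ P : Finset (EuclideanSpace ℝ (Fin 2)), P.card = m ∧
          ∀ i, Realises (P : Set (EuclideanSpace ℝ (Fin 2))) (θ i)} = 0 := by
  classical
  haveI : NeZero m := ⟨by omega⟩
  have hn1 : 1 ≤ n := by omega
  apply MeasureTheory.measure_mono_null
    (t := ⋃ g : Fin n → Fin m × Fin m × Fin m,
      Aux11.Phi (Aux11.castTriple g) '' Aux11.good (Aux11.castTriple g))
  · rintro θ ⟨hθIoo, P, hP, hreal⟩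
    simp only [hR] at hreal
    choose A B C hA hB hC hAB hCB hang using hreal
    set J : EuclideanSpace ℝ (Fin 2) ≃ₗᵢ[ℝ] ℂ := Complex.orthonormalBasisOneI.repr.symm with hJ
    have hcard : Fintype.card (↥P) = m := by rw [Fintype.card_coe]; exact hP
    set e : Fin m ≃ ↥P := (Fintype.equivFinOfCardEq hcard).symm with he
    set q : Fin m → ℂ := fun j => J ((e j : EuclideanSpace ℝ (Fin 2))) with hqdef
    have hqinj : Function.Injective q := by
      intro s t h
      exact e.injective (Subtype.ext (J.injective h))
    have h01 : (0 : Fin m) ≠ 1 := by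
      intro h
      have h2 := congrArg Fin.val h
      rw [Fin.val_zero, Fin.val_one'] at h2
      have h3 : (1 : ℕ) % m = 1 := Nat.mod_eq_of_lt (by omega)
      omega
    have hq10 : q 1 - q 0 ≠ 0 := sub_ne_zero.2 fun h => h01 (hqinj h).symm
    set cc : ℂ := (q 1 - q 0)⁻¹ with hccdef
    have hcc0 : cc ≠ 0 := inv_ne_zero hq10
    set N : ℂ → ℂ := fun w => cc * (w - q 0) with hNdef
    have hNsub : ∀ w1 w2, N w1 - N w2 = cc * (w1 - w2) := by
      intro w1 w2; simp only [hNdef]; ring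
    set z : ℕ → ℂ := fun j => if h : j < m then N (q ⟨j, h⟩) else 0 with hzdef
    set x : Fin n → ℝ :=
      fun k => if (k : ℕ) % 2 = 0 then (z ((k : ℕ) / 2 + 2)).re else (z ((k : ℕ) / 2 + 2)).im
      with hxdef
    have hptc : ∀ j : Fin m, Aux11.ptc x (j : ℕ) = N (q j) := by
      intro j
      have hjm : (j : ℕ) < m := j.isLt
      by_cases hj0 : (j : ℕ) = 0
      · have hje : j = 0 := Fin.ext (by simp [hj0])
        rw [hj0, hje]
        show (0 : ℂ) = N (q 0)
        simp [hNdef]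
      · by_cases hj1 : (j : ℕ) = 1
        · have hje : j = 1 := Fin.ext
            (by rw [hj1, Fin.val_one', Nat.mod_eq_of_lt (by omega)])
          rw [hj1, hje]
          show (1 : ℂ) = N (q 1)
          rw [hNdef]
          exact (inv_mul_cancel₀ hq10).symm
        · obtain ⟨t, ht⟩ : ∃ t, (j : ℕ) = t + 2 := ⟨(j : ℕ) - 2, by omega⟩
          unfold Aux11.ptc
          rw [if_neg hj0, if_neg hj1]
          have e1 : 2 * (j : ℕ) - 4 = 2 * t := by omega
          have e2 : 2 * (j : ℕ) - 3 = 2 * t + 1 := by omega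
          rw [e1, e2]
          have hb1 : 2 * t < n := by omega
          have hb2 : 2 * t + 1 < n := by omega
          unfold Aux11.pt
          rw [dif_pos hb1, dif_pos hb2]
          have hx1 : x ⟨2 * t, hb1⟩ = (z (t + 2)).re := by
            have m1 : (2 * t) % 2 = 0 := by omega
            have d1 : (2 * t) / 2 = t := by omega
            rw [hxdef]
            simp [m1, d1]
          have hx2 : x ⟨2 * t + 1, hb2⟩ = (z (t + 2)).im := by
            have m1 : (2 * t + 1) % 2 = 1 := by omega
            have d1 : (2 * t + 1) / 2 = t := by omega
            rw [hxdef]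
            simp only [m1, d1]
            norm_num
          rw [hx1, hx2, Complex.re_add_im]
          rw [hzdef]
          simp only [← ht, dif_pos hjm, Fin.eta]
    set a : Fin n → Fin m := fun i => e.symm ⟨A i, Finset.mem_coe.1 (hA i)⟩ with ha
    set b : Fin n → Fin m := fun i => e.symm ⟨B i, Finset.mem_coe.1 (hB i)⟩ with hb
    set c : Fin n → Fin m := fun i => e.symm ⟨C i, Finset.mem_coe.1 (hC i)⟩ with hc
    set g : Fin n → Fin m × Fin m × Fin m := fun i => (a i, b i, c i) with hgdef
    have hqa : ∀ i, q (a i) = J (A i) := by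
      intro i; rw [hqdef, ha]; simp
    have hqb : ∀ i, q (b i) = J (B i) := by
      intro i; rw [hqdef, hb]; simp
    have hqc : ∀ i, q (c i) = J (C i) := by
      intro i; rw [hqdef, hc]; simp
    have hu : ∀ i, Aux11.uu (Aux11.castTriple g) i x = cc * (J (A i) - J (B i)) := by
      intro i
      show Aux11.ptc x ((a i : ℕ)) - Aux11.ptc x ((b i : ℕ)) = _
      rw [hptc (a i), hptc (b i), hqa i, hqb i, hNsub]
    have hv : ∀ i, Aux11.vv (Aux11.castTriple g) i x = cc * (J (C i) - J (B i)) := by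
      intro i
      show Aux11.ptc x ((c i : ℕ)) - Aux11.ptc x ((b i : ℕ)) = _
      rw [hptc (c i), hptc (b i), hqc i, hqb i, hNsub]
    have hu0 : ∀ i, Aux11.uu (Aux11.castTriple g) i x ≠ 0 := by
      intro i; rw [hu i]
      exact mul_ne_zero hcc0 (sub_ne_zero.2 fun h => hAB i (J.injective h))
    have hv0 : ∀ i, Aux11.vv (Aux11.castTriple g) i x ≠ 0 := by
      intro i; rw [hv i]
      exact mul_ne_zero hcc0 (sub_ne_zero.2 fun h => hCB i (J.injective h))
    have hangle : ∀ i, InnerProductGeometry.angle (Aux11.uu (Aux11.castTriple g) i x)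
        (Aux11.vv (Aux11.castTriple g) i x) = θ i := by
      intro i
      calc InnerProductGeometry.angle (Aux11.uu (Aux11.castTriple g) i x)
            (Aux11.vv (Aux11.castTriple g) i x)
          = InnerProductGeometry.angle (J (A i - B i)) (J (C i - B i)) := by
            rw [hu i, hv i, Aux11.angle_mul_left hcc0, map_sub, map_sub]
        _ = InnerProductGeometry.angle (A i - B i) (C i - B i) :=
            J.toLinearIsometry.angle_map _ _
        _ = EuclideanGeometry.angle (A i) (B i) (C i) := by
            rw [EuclideanGeometry.angle, vsub_eq_sub, vsub_eq_sub]
        _ = θ i := hang i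
    have hrarccos : ∀ i, Real.arccos (Aux11.rr (Aux11.castTriple g) i x) = θ i := by
      intro i
      rw [← hangle i]
      rfl
    have hrIoo : ∀ i, Aux11.rr (Aux11.castTriple g) i x ∈ Set.Ioo (-1 : ℝ) 1 := by
      intro i
      have h1 := abs_le.1 (Aux11.abs_rr_le_one (Aux11.castTriple g) i x)
      constructor
      · rcases lt_or_eq_of_le h1.1 with h | h
        · exact h
        · exfalso
          have h2 := hrarccos i
          rw [← h, Real.arccos_neg_one] at h2
          exact (hθIoo i).2.ne' h2
      · rcases lt_or_eq_of_le h1.2 with h | h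
        · exact h
        · exfalso
          have h2 := hrarccos i
          rw [h, Real.arccos_one] at h2
          exact (hθIoo i).1.ne' h2.symm
    refine Set.mem_iUnion.2 ⟨g, ⟨x, ?_, ?_⟩⟩
    · intro i
      exact ⟨hu0 i, hv0 i, hrIoo i⟩
    · funext i
      exact hrarccos i
  · apply MeasureTheory.measure_iUnion_null
    intro g
    apply Aux11.phi_image_null hn1
    intro i
    simp only [Aux11.castTriple]
    have h1 : ((g i).1 : ℕ) < m := ((g i).1).isLt
    have h2 : ((g i).2.1 : ℕ) < m := ((g i).2.1).isLt
    have h3 : ((g i).2.2 : ℕ) < m := ((g i).2.2).isLt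
    exact ⟨by omega, by omega, by omega⟩

/-- for `m ≥ 2` and `n = 2m-3`, the set of `n`-tuples of angles
in `(0, π)` realisable by `m` points in the plane has Lebesgue measure zero. -/
theorem statement11 (m n : ℕ) (hm : 2 ≤ m) (hn : n = 2 * m - 3) :
    MeasureTheory.volume
      {θ : Fin n → ℝ | (∀ i, θ i ∈ Set.Ioo 0 Real.pi) ∧
        ∃ P : Finset (EuclideanSpace ℝ (Fin 2)), P.card = m ∧
          ∀ i, Realises (P : Set (EuclideanSpace ℝ (Fin 2))) (θ i)} = 0 :=
  statement11' m n hm hn (fun {d} P θ => Realises P θ) (fun _ _ => Iff.rfl)
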